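/- arXiv:2104.09253 — 2 statements merged into one kernel-verified Lean document; each statement's English description precedes it below -/
import Mathlib

section
/- Let F be a free group (on any set of generators). Then the intersection of all terms of the lower central series of F is trivial: ⋂_{i ≥ 0} γ_i F = {1}. In other words, free groups are residually nilpotent. -/
/-! # Free groups are residually nilpotent

Strategy (a variant of Magnus' argument using unipotent matrices): given a nontrivial
element `x` of the free group, write its reduced word as a concatenation of `k` "blocks"
`g₁^{e₁} ⋯ g_k^{e_k}` with `eᵢ ≠ 0` and adjacent generators distinct.  Map the free group
to units of `(k+1) × (k+1)` integer matrices, sending a generator `g` to `1 + N g`,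
where `N g` has a `1` in position `(t, t+1)` for each block `t` with generator `g`.
Since adjacent blocks have distinct generators, `N g * N g = 0`, so `(1 + N g)^e = 1 + e • N g`.
The `(0, k)` entry of the image of `x` is `e₁ ⋯ e_k ≠ 0`.  On the other hand, the image of the
`m`-th lower central series term consists of unipotent matrices that agree with `1` up to
distance `m` above the diagonal, so `x ∉ γ_k`. -/

open Matrix
open scoped commutatorElement

namespace ResNilpAux

/-! ### Blocks (run-length encoding with signs) of a word -/

/-- Sign of a boolean, as an integer. -/
def sgn (b : Bool) : ℤ := bif b then 1 else -1

lemma sgn_ne_zero (b : Bool) : sgn b ≠ 0 := by cases b <;> simp [sgn]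

lemma sgn_mul_self (b : Bool) : 0 < sgn b * sgn b := by cases b <;> simp [sgn]

noncomputable section
open scoped Classical

/-- Merge a new letter `(g, s)` (with `s = ±1`) into a block list. -/
def mergeBlock {α : Type*} (g : α) (s : ℤ) : List (α × ℤ) → List (α × ℤ)
  | [] => [(g, s)]
  | (g', e) :: r => if g = g' ∧ 0 < s * e then (g, e + s) :: r else (g, s) :: (g', e) :: r

lemma mergeBlock_nil {α : Type*} (g : α) (s : ℤ) : mergeBlock g s [] = [(g, s)] := rfl

lemma mergeBlock_cons {α : Type*} (g g' : α) (s e : ℤ) (r : List (α × ℤ)) :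
    mergeBlock g s ((g', e) :: r)
      = if g = g' ∧ 0 < s * e then (g, e + s) :: r else (g, s) :: (g', e) :: r := rfl

/-- Run-length encoding of a word in generators-with-signs into blocks `(g, e)`. -/
def blocks {α : Type*} : List (α × Bool) → List (α × ℤ)
  | [] => []
  | (g, b) :: t => mergeBlock g (sgn b) (blocks t)

lemma blocks_nil {α : Type*} : blocks ([] : List (α × Bool)) = [] := rfl

lemma blocks_cons {α : Type*} (g : α) (b : Bool) (t : List (α × Bool)) :
    blocks ((g, b) :: t) = mergeBlock g (sgn b) (blocks t) := rfl

/-- The product over letters equals the product over blocks, in any group. -/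
lemma blocks_prod {α : Type*} {M : Type*} [Group M] (f : α → M) :
    ∀ L : List (α × Bool),
      (L.map fun p => bif p.2 then f p.1 else (f p.1)⁻¹).prod
        = ((blocks L).map fun q => f q.1 ^ q.2).prod := by
  intro L
  induction L with
  | nil => simp [blocks_nil]
  | cons hd t ih =>
    obtain ⟨g, b⟩ := hd
    have hletter : (bif b then f g else (f g)⁻¹) = f g ^ sgn b := by
      cases b <;> simp [sgn]
    rw [List.map_cons, List.prod_cons, ih, blocks_cons]
    cases hbt : blocks t with
    | nil => simp [mergeBlock_nil, hletter]
    | cons q r =>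
      obtain ⟨g', e⟩ := q
      rw [mergeBlock_cons]
      by_cases hc : g = g' ∧ 0 < sgn b * e
      · rw [if_pos hc]
        obtain ⟨rfl, -⟩ := hc
        rw [List.map_cons, List.prod_cons, List.map_cons, List.prod_cons, hletter]
        show f g ^ sgn b * (f g ^ e * _) = f g ^ (e + sgn b) * _
        rw [← mul_assoc, ← _root_.zpow_add, add_comm]
      · rw [if_neg hc, List.map_cons, List.prod_cons, List.map_cons, List.prod_cons,
          List.map_cons, List.prod_cons, hletter]

/-- Structure of the blocks of a reduced word. -/
lemma blocks_spec {α : Type*} :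
    ∀ L : List (α × Bool), List.Chain' (fun a b => a.1 = b.1 → a.2 = b.2) L →
      List.Chain' (fun p q => p.1 ≠ q.1) (blocks L) ∧
      (∀ p ∈ blocks L, p.2 ≠ 0) ∧
      (∀ g b t, L = (g, b) :: t → ∃ e r, blocks L = (g, e) :: r ∧ 0 < sgn b * e) := by
  intro L
  induction L with
  | nil => exact fun _ => ⟨List.isChain_nil, by simp [blocks_nil], fun g b t h => by simp at h⟩
  | cons hd t ih =>
    intro hred
    obtain ⟨g, b⟩ := hd
    obtain ⟨ihc, ihnz, ihhead⟩ := ih hred.tail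
    cases hbt : blocks t with
    | nil =>
      have hbl : blocks ((g, b) :: t) = [(g, sgn b)] := by
        rw [blocks_cons, hbt, mergeBlock_nil]
      refine ⟨?_, ?_, ?_⟩
      · rw [hbl]; exact List.isChain_singleton _
      · intro p hp
        rw [hbl, List.mem_singleton] at hp
        subst hp; exact sgn_ne_zero b
      · intro g'' b'' t'' h
        injection h with h1 h2
        injection h1 with hg hb
        exact ⟨sgn b, [], by rw [← hg]; exact hbl, by rw [← hb]; exact sgn_mul_self b⟩
    | cons q r =>
      obtain ⟨g', e⟩ := q
      rw [hbt] at ihc ihnz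
      by_cases hc : g = g' ∧ 0 < sgn b * e
      · have hbl : blocks ((g, b) :: t) = (g, e + sgn b) :: r := by
          rw [blocks_cons, hbt, mergeBlock_cons, if_pos hc]
        have hnz' : 0 < sgn b * (e + sgn b) := by
          have := sgn_mul_self b
          have := hc.2
          nlinarith
        refine ⟨?_, ?_, ?_⟩
        · rw [hbl]
          rcases r with _ | ⟨q', r'⟩
          · exact List.isChain_singleton _
          · refine List.isChain_cons_cons.2 ⟨?_, (List.isChain_cons_cons.1 ihc).2⟩
            have := (List.isChain_cons_cons.1 ihc).1
            simpa [hc.1] using this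
        · intro p hp
          rw [hbl] at hp
          rcases List.mem_cons.1 hp with rfl | hp
          · intro h0
            simp only at h0
            rw [h0, mul_zero] at hnz'
            exact lt_irrefl 0 hnz'
          · exact ihnz p (List.mem_cons_of_mem _ hp)
        · intro g'' b'' t'' h
          injection h with h1 h2
          injection h1 with hg hb
          exact ⟨e + sgn b, r, by rw [← hg]; exact hbl, by rw [← hb]; exact hnz'⟩
      · have hbl : blocks ((g, b) :: t) = (g, sgn b) :: (g', e) :: r := by
          rw [blocks_cons, hbt, mergeBlock_cons, if_neg hc]
        have hne : g ≠ g' := by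
          intro hgg
          apply hc
          refine ⟨hgg, ?_⟩
          -- t is nonempty, its head letter has generator g' and, by reducedness, sign b
          rcases t with _ | ⟨⟨g2, b2⟩, t2⟩
          · rw [blocks_nil] at hbt; exact absurd hbt (by simp)
          · obtain ⟨e2, r2, hbr, hpos⟩ := ihhead g2 b2 t2 rfl
            rw [hbt] at hbr
            injection hbr with hq hr
            injection hq with hg2 he2
            -- reducedness of (g,b)::(g2,b2)::t2 : g = g2 → b = b2
            have hred2 : g = g2 → b = b2 := (List.isChain_cons_cons.1 hred).1
            have hb2 : b = b2 := hred2 (hgg.trans hg2)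
            rw [← he2, ← hb2] at hpos
            exact hpos
        refine ⟨?_, ?_, ?_⟩
        · rw [hbl]
          exact List.isChain_cons_cons.2 ⟨hne, ihc⟩
        · intro p hp
          rw [hbl] at hp
          rcases List.mem_cons.1 hp with rfl | hp
          · exact sgn_ne_zero b
          · exact ihnz p hp
        · intro g'' b'' t'' h
          injection h with h1 h2
          injection h1 with hg hb
          exact ⟨sgn b, (g', e) :: r, by rw [← hg]; exact hbl, by rw [← hb]; exact sgn_mul_self b⟩

/-! ### The unipotent matrices -/

section Matrices

variable {α : Type*} (B : List (α × ℤ))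

local notation "k" => B.length

/-- The matrix ring we work in. -/
abbrev R := Matrix (Fin (k + 1)) (Fin (k + 1)) ℤ

open scoped Classical in
/-- `N B g` has a `1` in entry `(t, t+1)` for every block `t` of `B` with generator `g`. -/
def N (g : α) : R B := Matrix.of fun i j =>
  if (j : ℕ) = (i : ℕ) + 1 ∧ (∃ h : (i : ℕ) < k, (B.get ⟨i, h⟩).1 = g) then 1 else 0

lemma N_apply_ne {g : α} {i j : Fin (k + 1)} (h : (N B g) i j ≠ 0) :
    (j : ℕ) = (i : ℕ) + 1 ∧ ∃ h : (i : ℕ) < k, (B.get ⟨i, h⟩).1 = g := by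
  by_contra hc
  exact h (by simp only [N, Matrix.of_apply, if_neg hc])

lemma N_sq (hchain : List.Chain' (fun p q => p.1 ≠ q.1) B) (g : α) :
    N B g * N B g = 0 := by
  ext i j
  rw [Matrix.mul_apply]
  rw [Matrix.zero_apply]
  apply Finset.sum_eq_zero
  intro m _
  by_cases h1 : (N B g) i m = 0
  · rw [h1, zero_mul]
  by_cases h2 : (N B g) m j = 0
  · rw [h2, mul_zero]
  exfalso
  obtain ⟨hm, hi, hig⟩ := N_apply_ne B h1
  obtain ⟨hj, hm', hmg⟩ := N_apply_ne B h2
  have hik : (i : ℕ) < k - 1 := by omega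
  have hch := List.isChain_iff_getElem.1 hchain (i : ℕ) (by omega)
  have hidx : (⟨(m : ℕ), hm'⟩ : Fin k) = ⟨(i : ℕ) + 1, by omega⟩ := Fin.ext hm
  exact hch (hig.trans ((hmg.symm).trans (congrArg (fun z => (B.get z).1) hidx)))

/-- The unit `1 + N g`. -/
def U (hchain : List.Chain' (fun p q => p.1 ≠ q.1) B) (g : α) : (R B)ˣ where
  val := 1 + N B g
  inv := 1 - N B g
  val_inv := by
    rw [add_mul, one_mul, mul_sub, mul_one, N_sq B hchain, sub_zero]
    abel
  inv_val := by
    rw [sub_mul, one_mul, mul_add, mul_one, N_sq B hchain, add_zero]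
    abel

lemma U_zpow (hchain : List.Chain' (fun p q => p.1 ≠ q.1) B) (g : α) (e : ℤ) :
    ((U B hchain g ^ e : (R B)ˣ) : R B) = 1 + e • N B g := by
  induction e using Int.induction_on with
  | zero => simp
  | succ n ih =>
    rw [_root_.zpow_add_one, Units.val_mul, ih]
    show (1 + (n : ℤ) • N B g) * (1 + N B g) = _
    rw [mul_add, mul_one, add_mul, one_mul, smul_mul_assoc, N_sq B hchain, smul_zero,
      add_zero, add_smul, one_smul]
    abel
  | pred n ih =>
    rw [_root_.zpow_sub_one, Units.val_mul, ih]
    show (1 + (-(n : ℤ)) • N B g) * (1 - N B g) = _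
    rw [mul_sub, mul_one, add_mul, one_mul, smul_mul_assoc, N_sq B hchain, smul_zero,
      add_zero, sub_smul, one_smul]
    abel

lemma U_inv_val (hchain : List.Chain' (fun p q => p.1 ≠ q.1) B) (g : α) :
    (((U B hchain g)⁻¹ : (R B)ˣ) : R B) = 1 - N B g := rfl

lemma U_val (hchain : List.Chain' (fun p q => p.1 ≠ q.1) B) (g : α) :
    ((U B hchain g : (R B)ˣ) : R B) = 1 + N B g := rfl

/-! ### Entry computation -/

/-- A product of matrices of the form `1 + A` with `A` supported on the superdiagonal
vanishes at `(p, q)` whenever `q > p + (number of factors)`. -/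
lemma prod_entry_zero :
    ∀ (l : List (R B)),
      (∀ A ∈ l, ∀ i j : Fin (k + 1), (A - 1) i j ≠ 0 → (j : ℕ) = (i : ℕ) + 1) →
      ∀ p q : Fin (k + 1), (p : ℕ) + l.length < (q : ℕ) → l.prod p q = 0 := by
  intro l
  induction l with
  | nil =>
    intro _ p q hpq
    simp only [List.prod_nil]
    exact Matrix.one_apply_ne (by intro h; rw [h] at hpq; omega)
  | cons A l ih =>
    intro hsup p q hpq
    rw [List.prod_cons, Matrix.mul_apply]
    apply Finset.sum_eq_zero
    intro m _
    by_cases hm : (m : ℕ) ≤ (p : ℕ) + 1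
    · have hrest : l.prod m q = 0 := by
        apply ih (fun A' hA' => hsup A' (List.mem_cons_of_mem _ hA'))
        simp only [List.length_cons] at hpq
        omega
      rw [hrest, mul_zero]
    · have hA : A p m = 0 := by
        have h1 : (1 : R B) p m = 0 :=
          Matrix.one_apply_ne (by intro h; rw [h] at hm; omega)
        by_contra hc
        have : (A - 1) p m ≠ 0 := by
          rw [Matrix.sub_apply, h1, sub_zero]; exact hc
        have := hsup A (List.mem_cons_self) p m this
        omega
      rw [hA, zero_mul]

/-- Main computation: the `(p, k)` entry of the product of `1 + eⱼ • N gⱼ` over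
the blocks from position `p` on is the product of the exponents. -/
lemma main_entry :
    ∀ (l : List (α × ℤ)) (p : Fin (k + 1)), (p : ℕ) + l.length = k →
      l = B.drop (p : ℕ) →
      ((l.map fun q => (1 : R B) + q.2 • N B q.1).prod) p (Fin.last k)
        = (l.map Prod.snd).prod := by
  intro l
  induction l with
  | nil =>
    intro p hp _
    have : p = Fin.last k := by
      apply Fin.ext; simp only [Fin.val_last]; simpa using hp
    subst this
    simp [Matrix.one_apply_eq]
  | cons q l ih =>
    intro p hp hdrop
    obtain ⟨g, e⟩ := q
    have hpk : (p : ℕ) < k := by simp only [List.length_cons] at hp; omega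
    have hget : B.get ⟨(p : ℕ), hpk⟩ = (g, e) := by
      have := List.drop_eq_getElem_cons (l := B) (i := (p : ℕ)) hpk
      rw [← hdrop] at this
      injection this with h1 _
      simpa using h1.symm
    have hdrop' : l = B.drop ((p : ℕ) + 1) := by
      have := List.drop_eq_getElem_cons (l := B) (i := (p : ℕ)) hpk
      rw [← hdrop] at this
      injection this with _ h2
    set p' : Fin (k + 1) := ⟨(p : ℕ) + 1, by omega⟩ with hp'
    rw [List.map_cons, List.prod_cons, Matrix.mul_apply]
    rw [Finset.sum_eq_single p']
    · have hNpp' : (N B g) p p' = 1 := by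
        have hc : ((p' : Fin (B.length + 1)) : ℕ) = ((p : Fin (B.length + 1)) : ℕ) + 1
            ∧ ∃ h : ((p : Fin (B.length + 1)) : ℕ) < B.length,
              (B.get ⟨(p : ℕ), h⟩).1 = g := ⟨rfl, hpk, by rw [hget]⟩
        exact if_pos hc
      have hfac : ((1 : R B) + e • N B g) p p' = e := by
        rw [Matrix.add_apply, Matrix.smul_apply, hNpp', Matrix.one_apply_ne, smul_eq_mul,
          mul_one, zero_add]
        intro h
        have := congrArg Fin.val h
        simp [hp'] at this
      rw [hfac]
      rw [ih p' (show ((p : ℕ) + 1) + l.length = B.length by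
        simp only [List.length_cons] at hp; omega) hdrop']
      simp
    · intro m _ hmne
      by_cases hm : (m : ℕ) = (p : ℕ) + 1
      · exact absurd (Fin.ext (by simp [hp', hm])) hmne
      by_cases hmp : m = p
      · -- factor entry is 1, but the remaining product vanishes
        subst hmp
        have hrest : ((l.map fun q => (1 : R B) + q.2 • N B q.1).prod) m (Fin.last k) = 0 := by
          apply prod_entry_zero B
          · intro A hA i j hij
            obtain ⟨⟨g', e'⟩, _, rfl⟩ := List.mem_map.1 hA
            have h1 : ((1 : R B) + (g', e').2 • N B (g', e').1 - 1) = e' • N B g' := by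
              simp
            rw [h1] at hij
            have hN : (N B g') i j ≠ 0 := fun h0 => hij (by
              rw [Matrix.smul_apply, h0, smul_zero])
            exact (N_apply_ne B hN).1
          · simp only [List.length_map, Fin.val_last]
            simp only [List.length_cons] at hp
            omega
        rw [hrest, mul_zero]
      · have hfac : ((1 : R B) + e • N B g) p m = 0 := by
          have hN : (N B g) p m = 0 := by
            by_contra hc
            exact hm (N_apply_ne B hc).1
          rw [Matrix.add_apply, Matrix.smul_apply, hN, smul_zero, add_zero]
          exact Matrix.one_apply_ne (Ne.symm hmp)
        rw [hfac, zero_mul]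
    · intro hnotmem
      exact absurd (Finset.mem_univ p') hnotmem

/-! ### The filtration by distance above the diagonal -/

/-- `IsUpper m A` : all entries of `A` within distance `< m` above the diagonal vanish. -/
def IsUpper (m : ℕ) (A : R B) : Prop :=
  ∀ i j : Fin (k + 1), (j : ℕ) < (i : ℕ) + m → A i j = 0

lemma IsUpper.mono {m m' : ℕ} (h : m' ≤ m) {A : R B} (hA : IsUpper B m A) :
    IsUpper B m' A := fun i j hij => hA i j (by omega)

lemma IsUpper.add {m : ℕ} {A A' : R B} (hA : IsUpper B m A) (hA' : IsUpper B m A') :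
    IsUpper B m (A + A') := fun i j hij => by
  rw [Matrix.add_apply, hA i j hij, hA' i j hij, add_zero]

lemma IsUpper.sub {m : ℕ} {A A' : R B} (hA : IsUpper B m A) (hA' : IsUpper B m A') :
    IsUpper B m (A - A') := fun i j hij => by
  rw [Matrix.sub_apply, hA i j hij, hA' i j hij, sub_zero]

lemma IsUpper.one : IsUpper B 0 (1 : R B) := fun i j hij =>
  Matrix.one_apply_ne (fun h => by subst h; omega)

lemma IsUpper.neg {m : ℕ} {A : R B} (hA : IsUpper B m A) : IsUpper B m (-A) :=
  fun i j hij => by rw [Matrix.neg_apply, hA i j hij, neg_zero]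

lemma N_isUpper (g : α) : IsUpper B 1 (N B g) := fun i j hij => by
  by_contra hc
  have := (N_apply_ne B hc).1
  omega

lemma IsUpper.mul {p q : ℕ} {A A' : R B} (hA : IsUpper B p A) (hA' : IsUpper B q A') :
    IsUpper B (p + q) (A * A') := by
  intro i j hij
  rw [Matrix.mul_apply]
  apply Finset.sum_eq_zero
  intro m _
  by_cases hm : (m : ℕ) < (i : ℕ) + p
  · rw [hA i m hm, zero_mul]
  · rw [hA' m j (by omega), mul_zero]

/-- The subgroup of units congruent to `1` up to distance `m` above the diagonal. -/
def Gsub (m : ℕ) : Subgroup (R B)ˣ where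
  carrier := {u | IsUpper B m ((u : R B) - 1) ∧ IsUpper B m (((u⁻¹ : (R B)ˣ) : R B) - 1)}
  one_mem' := by
    constructor <;>
    · simp only [inv_one, Units.val_one, sub_self]
      exact fun i j _ => rfl
  mul_mem' := by
    rintro u v ⟨hu, hui⟩ ⟨hv, hvi⟩
    constructor
    · have h : ((u * v : (R B)ˣ) : R B) - 1
          = ((u : R B) - 1) * ((v : R B) - 1) + (((u : R B) - 1) + ((v : R B) - 1)) := by
        rw [Units.val_mul]; noncomm_ring
      rw [h]
      exact IsUpper.add B (IsUpper.mono B (by omega) (IsUpper.mul B hu hv))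
        (IsUpper.add B hu hv)
    · have h : (((u * v)⁻¹ : (R B)ˣ) : R B) - 1
          = (((v⁻¹ : (R B)ˣ) : R B) - 1) * (((u⁻¹ : (R B)ˣ) : R B) - 1)
            + ((((v⁻¹ : (R B)ˣ) : R B) - 1) + (((u⁻¹ : (R B)ˣ) : R B) - 1)) := by
        rw [_root_.mul_inv_rev, Units.val_mul]; noncomm_ring
      rw [h]
      exact IsUpper.add B (IsUpper.mono B (by omega) (IsUpper.mul B hvi hui))
        (IsUpper.add B hvi hui)
  inv_mem' := by
    rintro u ⟨hu, hui⟩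
    exact ⟨hui, by rwa [inv_inv]⟩

lemma mem_Gsub_comm {pn qn : ℕ} {u v : (R B)ˣ} (hu : u ∈ Gsub B pn) (hv : v ∈ Gsub B qn) :
    ⁅u, v⁆ ∈ Gsub B (pn + qn) := by
  have key : ∀ (p q : ℕ) (a b : (R B)ˣ), a ∈ Gsub B p → b ∈ Gsub B q →
      IsUpper B (p + q) (((⁅a, b⁆ : (R B)ˣ) : R B) - 1) := by
    intro p q a b ha hb
    have hainv : IsUpper B 0 (((a⁻¹ : (R B)ˣ) : R B)) := by
      have h1 : ((a⁻¹ : (R B)ˣ) : R B) = (((a⁻¹ : (R B)ˣ) : R B) - 1) + 1 := by abel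
      rw [h1]
      exact IsUpper.add B (IsUpper.mono B (Nat.zero_le p) ha.2) (IsUpper.one B)
    have hbinv : IsUpper B 0 (((b⁻¹ : (R B)ˣ) : R B)) := by
      have h1 : ((b⁻¹ : (R B)ˣ) : R B) = (((b⁻¹ : (R B)ˣ) : R B) - 1) + 1 := by abel
      rw [h1]
      exact IsUpper.add B (IsUpper.mono B (Nat.zero_le q) hb.2) (IsUpper.one B)
    have hcomm : ((⁅a, b⁆ : (R B)ˣ) : R B) - 1
        = (((a : R B) - 1) * ((b : R B) - 1) - ((b : R B) - 1) * ((a : R B) - 1))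
          * ((a⁻¹ : (R B)ˣ) : R B) * ((b⁻¹ : (R B)ˣ) : R B) := by
      have h1 : ((⁅a, b⁆ : (R B)ˣ) : R B)
          = (a : R B) * (b : R B) * ((a⁻¹ : (R B)ˣ) : R B) * ((b⁻¹ : (R B)ˣ) : R B) := by
        rw [commutatorElement_def, Units.val_mul, Units.val_mul, Units.val_mul]
      have h3 : (b : R B) * (a : R B) * ((a⁻¹ : (R B)ˣ) : R B) * ((b⁻¹ : (R B)ˣ) : R B)
          = 1 := by
        rw [mul_assoc ((b : R B)), Units.mul_inv, mul_one, Units.mul_inv]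
      have h2 : (((a : R B) - 1) * ((b : R B) - 1) - ((b : R B) - 1) * ((a : R B) - 1))
          = (a : R B) * (b : R B) - (b : R B) * (a : R B) := by noncomm_ring
      rw [h2, h1, sub_mul, sub_mul, h3]
    rw [hcomm]
    have hmid : IsUpper B (p + q)
        ((((a : R B) - 1) * ((b : R B) - 1) - ((b : R B) - 1) * ((a : R B) - 1))) :=
      IsUpper.sub B (IsUpper.mul B ha.1 hb.1)
        (IsUpper.mono B (by omega) (IsUpper.mul B hb.1 ha.1))
    have hfin := IsUpper.mul B (IsUpper.mul B hmid hainv) hbinv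
    simpa using hfin
  constructor
  · exact (key pn qn u v hu hv)
  · rw [commutatorElement_inv, Nat.add_comm]
    exact key qn pn v u hv hu

end Matrices

end

/-! ### Reducedness of `toWord` -/

lemma toWord_chain' {α : Type*} [DecidableEq α] (x : FreeGroup α) :
    List.Chain' (fun a b => a.1 = b.1 → a.2 = b.2) x.toWord := by
  refine List.isChain_iff_getElem.2 ?_
  intro i hi hfst
  by_contra hsnd
  set L := x.toWord with hL
  have hia : i < L.length := by omega
  have hib : i + 1 < L.length := by omega
  have hredL : FreeGroup.reduce L = L := by
    rw [hL, ← FreeGroup.toWord_mk, FreeGroup.mk_toWord]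
  set a := (L.get ⟨i, hia⟩).1 with ha
  set c := (L.get ⟨i, hia⟩).2 with hc
  have hp1 : L.get ⟨i, hia⟩ = (a, c) := rfl
  have hp2 : L.get ⟨i + 1, hib⟩ = (a, !c) := by
    have h2a : (L.get ⟨i + 1, hib⟩).1 = a := hfst.symm
    have h2b : (L.get ⟨i + 1, hib⟩).2 = !c := by
      rcases Bool.eq_false_or_eq_true (L.get ⟨i + 1, hib⟩).2 with h | h <;>
        rcases Bool.eq_false_or_eq_true c with h' | h' <;>
          simp_all
    rw [← h2a, ← h2b]
  have hdecomp : L = L.take i ++ (a, c) :: (a, !c) :: L.drop (i + 2) := by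
    conv_lhs => rw [← List.take_append_drop i L]
    congr 1
    rw [List.drop_eq_getElem_cons hia, List.drop_eq_getElem_cons hib]
    rw [show L[i] = L.get ⟨i, hia⟩ from rfl, show L[i + 1] = L.get ⟨i + 1, hib⟩ from rfl,
      hp1, hp2]
  exact FreeGroup.reduce.not (hredL.trans hdecomp)

end ResNilpAux

/-- Free groups are residually nilpotent: the intersection of the terms of the lower
central series of a free group is trivial. -/
theorem freeGroup_residually_nilpotent (α : Type*) :
    (⨅ i : ℕ, Subgroup.lowerCentralSeries (⊤ : Subgroup (FreeGroup α)) i) = ⊥ := by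
  classical
  rw [eq_bot_iff]
  intro x hx
  rw [Subgroup.mem_iInf] at hx
  simp only [Subgroup.mem_bot]
  by_contra hx1
  set L := x.toWord with hL
  have hLne : L ≠ [] := fun h => hx1 (FreeGroup.toWord_eq_nil_iff.1 h)
  obtain ⟨hchain, hnz, hhead⟩ := ResNilpAux.blocks_spec L (ResNilpAux.toWord_chain' x)
  set B := ResNilpAux.blocks L with hB
  set k := B.length with hk
  have hk1 : 1 ≤ k := by
    rcases hLl : L with _ | ⟨⟨g, b⟩, t⟩
    · exact absurd hLl hLne
    · obtain ⟨e, r, hbr, -⟩ := hhead g b t hLl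
      rw [hk, hbr]
      simp
  set ρ := FreeGroup.lift (fun g => ResNilpAux.U B hchain g) with hρ
  -- Every element maps into `Gsub B 1`.
  have hall : ∀ y : FreeGroup α, ρ y ∈ ResNilpAux.Gsub B 1 := by
    intro y
    refine FreeGroup.induction_on y ?_ ?_ ?_ ?_
    · rw [_root_.map_one]; exact one_mem _
    · intro g
      have : ρ (FreeGroup.of g) = ResNilpAux.U B hchain g := FreeGroup.lift_apply_of
      rw [this]
      constructor
      · rw [ResNilpAux.U_val B hchain g, add_sub_cancel_left]
        exact ResNilpAux.N_isUpper B g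
      · rw [ResNilpAux.U_inv_val B hchain g]
        have : (1 : ResNilpAux.R B) - ResNilpAux.N B g - 1 = -(ResNilpAux.N B g) := by abel
        rw [this]
        exact ResNilpAux.IsUpper.neg B (ResNilpAux.N_isUpper B g)
    · intro g hg
      rw [_root_.map_inv]
      exact inv_mem hg
    · intro y z hy hz
      rw [_root_.map_mul]
      exact mul_mem hy hz
  -- The lower central series maps into the filtration.
  have hmap : ∀ m : ℕ, ∀ y ∈ Subgroup.lowerCentralSeries (⊤ : Subgroup (FreeGroup α)) m,
      ρ y ∈ ResNilpAux.Gsub B (m + 1) := by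
    intro m
    induction m with
    | zero => exact fun y _ => hall y
    | succ m ih =>
      intro y hy
      rw [Subgroup.lowerCentralSeries_succ] at hy
      refine Subgroup.closure_induction ?_ ?_ ?_ ?_ hy
      · rintro z ⟨p, hp, q, -, rfl⟩
        have hz : ρ (p * q * p⁻¹ * q⁻¹) = ⁅ρ p, ρ q⁆ := by
          rw [commutatorElement_def]
          simp only [_root_.map_mul, _root_.map_inv]
        rw [commutatorElement_def, hz]
        exact ResNilpAux.mem_Gsub_comm B (ih p hp) (hall q)
      · rw [_root_.map_one]; exact one_mem _
      · intro z w _ _ hz hw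
        rw [_root_.map_mul]; exact mul_mem hz hw
      · intro z _ hz
        rw [_root_.map_inv]; exact inv_mem hz
  -- The `(0, k)` entry of `ρ x` is the product of the block exponents.
  have himg : ((ρ x : (ResNilpAux.R B)ˣ) : ResNilpAux.R B)
      = (B.map fun q => (1 : ResNilpAux.R B) + q.2 • ResNilpAux.N B q.1).prod := by
    conv_lhs => rw [← FreeGroup.mk_toWord (x := x)]
    rw [hρ, FreeGroup.lift_mk, ← hL,
      ResNilpAux.blocks_prod (fun g => ResNilpAux.U B hchain g) L, ← hB,
      ← Units.coeHom_apply, map_list_prod, List.map_map]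
    exact congrArg List.prod
      (List.map_congr_left fun q _ => ResNilpAux.U_zpow B hchain q.1 q.2)
  have hentry : ((ρ x : (ResNilpAux.R B)ˣ) : ResNilpAux.R B) ⟨0, by omega⟩ (Fin.last k)
      = (B.map Prod.snd).prod := by
    rw [himg]
    exact ResNilpAux.main_entry B B ⟨0, by omega⟩ (by simp) (by simp)
  have hprodne : (B.map Prod.snd).prod ≠ 0 := by
    apply List.prod_ne_zero
    intro h0
    obtain ⟨q, hq, hq0⟩ := List.mem_map.1 h0
    exact hnz q hq hq0
  -- But `x ∈ γ k`, so that entry vanishes.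
  have hxk := hmap k x (hx k)
  have hupper := hxk.1
  have hzero : (((ρ x : (ResNilpAux.R B)ˣ) : ResNilpAux.R B) - 1) ⟨0, by omega⟩ (Fin.last k)
      = 0 := by
    apply hupper
    simp only [Fin.val_last]
    omega
  rw [Matrix.sub_apply] at hzero
  have hone : (1 : ResNilpAux.R B) (⟨0, by omega⟩ : Fin (k + 1)) (Fin.last k) = 0 := by
    apply Matrix.one_apply_ne
    intro h
    have := congrArg Fin.val h
    simp only [Fin.val_last] at this
    omega
  rw [hone, sub_zero] at hzero
  rw [hentry] at hzero
  exact hprodne hzero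
end

section
/- Let F be the free group on generators a_1, b_1, ..., a_g, b_g with g ≥ 1, and let c = [a_1,b_1][a_2,b_2]⋯[a_g,b_g]. Then for every nonzero integer k, the element c^k a_1 c^{-k} a_1^{-1} lies in γ_2 F but does not lie in γ_3 F. Consequently, for k ≠ 0 the inner automorphism of F given by conjugation by c^k induces a nontrivial automorphism of the quotient F/γ_3 F. -/
open scoped commutatorElement

namespace BTP

lemma lcs_succ (G : Type*) [Group G] (n : ℕ) :
    (⊤ : Subgroup G).lowerCentralSeries (n + 1) = ⁅(⊤ : Subgroup G).lowerCentralSeries n, ⊤⁆ := rfl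

/-- The unitriangular group UT(4,ℤ) in coordinates. -/
@[ext] structure UT4 where
  p : ℤ
  q : ℤ
  r : ℤ
  s : ℤ
  t : ℤ
  u : ℤ

namespace UT4

instance : Mul UT4 :=
  ⟨fun x y => ⟨x.p + y.p, x.q + y.q + x.p * y.s, x.r + y.r + x.p * y.t + x.q * y.u,
    x.s + y.s, x.t + y.t + x.s * y.u, x.u + y.u⟩⟩

instance : One UT4 := ⟨⟨0, 0, 0, 0, 0, 0⟩⟩

instance : Inv UT4 :=
  ⟨fun x => ⟨-x.p, -x.q + x.p * x.s, -x.r + x.p * x.t + x.q * x.u - x.p * x.s * x.u,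
    -x.s, -x.t + x.s * x.u, -x.u⟩⟩

@[simp] lemma mul_p (x y : UT4) : (x * y).p = x.p + y.p := rfl
@[simp] lemma mul_q (x y : UT4) : (x * y).q = x.q + y.q + x.p * y.s := rfl
@[simp] lemma mul_r (x y : UT4) : (x * y).r = x.r + y.r + x.p * y.t + x.q * y.u := rfl
@[simp] lemma mul_s (x y : UT4) : (x * y).s = x.s + y.s := rfl
@[simp] lemma mul_t (x y : UT4) : (x * y).t = x.t + y.t + x.s * y.u := rfl
@[simp] lemma mul_u (x y : UT4) : (x * y).u = x.u + y.u := rfl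
@[simp] lemma one_p : (1 : UT4).p = 0 := rfl
@[simp] lemma one_q : (1 : UT4).q = 0 := rfl
@[simp] lemma one_r : (1 : UT4).r = 0 := rfl
@[simp] lemma one_s : (1 : UT4).s = 0 := rfl
@[simp] lemma one_t : (1 : UT4).t = 0 := rfl
@[simp] lemma one_u : (1 : UT4).u = 0 := rfl
@[simp] lemma inv_p (x : UT4) : (x⁻¹).p = -x.p := rfl
@[simp] lemma inv_q (x : UT4) : (x⁻¹).q = -x.q + x.p * x.s := rfl
@[simp] lemma inv_r (x : UT4) :
    (x⁻¹).r = -x.r + x.p * x.t + x.q * x.u - x.p * x.s * x.u := rfl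
@[simp] lemma inv_s (x : UT4) : (x⁻¹).s = -x.s := rfl
@[simp] lemma inv_t (x : UT4) : (x⁻¹).t = -x.t + x.s * x.u := rfl
@[simp] lemma inv_u (x : UT4) : (x⁻¹).u = -x.u := rfl

instance : Group UT4 where
  mul_assoc x y z := by ext <;> simp <;> ring
  one_mul x := by ext <;> simp
  mul_one x := by ext <;> simp
  inv_mul_cancel x := by ext <;> simp <;> ring

/-- Subgroup with zero superdiagonal: contains all commutators. -/
def K : Subgroup UT4 where
  carrier := {x | x.p = 0 ∧ x.s = 0 ∧ x.u = 0}
  one_mem' := by simp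
  mul_mem' := by rintro x y ⟨h1, h2, h3⟩ ⟨h4, h5, h6⟩; simp_all
  inv_mem' := by rintro x ⟨h1, h2, h3⟩; simp_all

/-- The central subgroup (only the corner entry). -/
def Z : Subgroup UT4 where
  carrier := {x | x.p = 0 ∧ x.q = 0 ∧ x.s = 0 ∧ x.t = 0 ∧ x.u = 0}
  one_mem' := by simp
  mul_mem' := by rintro x y ⟨_, _, _, _, _⟩ ⟨_, _, _, _, _⟩; simp_all
  inv_mem' := by rintro x ⟨_, _, _, _, _⟩; simp_all

lemma lcs1_le : (⊤ : Subgroup UT4).lowerCentralSeries 1 ≤ K := by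
  rw [lcs_succ, Subgroup.commutator_le]
  intro x _ y _
  refine ⟨?_, ?_, ?_⟩ <;> simp [commutatorElement_def] <;> ring

lemma lcs2_le : (⊤ : Subgroup UT4).lowerCentralSeries 2 ≤ Z := by
  rw [lcs_succ]
  calc ⁅(⊤ : Subgroup UT4).lowerCentralSeries 1, ⊤⁆ ≤ ⁅K, ⊤⁆ :=
        Subgroup.commutator_mono lcs1_le le_rfl
    _ ≤ Z := by
        rw [Subgroup.commutator_le]
        rintro x ⟨hp, hs, hu⟩ y _
        refine ⟨?_, ?_, ?_, ?_, ?_⟩ <;>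
          simp [commutatorElement_def, hp, hs, hu] <;> ring

lemma lcs3_eq_bot : (⊤ : Subgroup UT4).lowerCentralSeries 3 = ⊥ := by
  rw [eq_bot_iff, lcs_succ]
  calc ⁅(⊤ : Subgroup UT4).lowerCentralSeries 2, ⊤⁆ ≤ ⁅Z, ⊤⁆ :=
        Subgroup.commutator_mono lcs2_le le_rfl
    _ ≤ ⊥ := by
        rw [Subgroup.commutator_le]
        rintro x ⟨hp, hq, hs, ht, hu⟩ y _
        rw [Subgroup.mem_bot]
        ext <;> simp [commutatorElement_def, hp, hq, hs, ht, hu] <;> ring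

/-- The image of `a_1`. -/
def A : UT4 := ⟨1, 0, 0, 0, 0, 1⟩
/-- The image of `b_1`. -/
def B : UT4 := ⟨0, 0, 0, 1, 0, 0⟩
/-- The image of `c`. -/
def C : UT4 := ⟨0, 1, -1, 0, -1, 0⟩

lemma comm_AB : ⁅A, B⁆ = C := by
  ext <;> simp [commutatorElement_def, A, B, C]

lemma C_zpow (k : ℤ) : C ^ k = ⟨0, k, -k, 0, -k, 0⟩ := by
  induction k using Int.induction_on with
  | zero => ext <;> simp
  | succ n ih => rw [zpow_add_one, ih]; ext <;> simp [C] <;> push_cast <;> ring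
  | pred n ih => rw [zpow_sub_one, ih]; ext <;> simp [C] <;> push_cast <;> ring

lemma key_r (k : ℤ) : (C ^ k * A * C ^ (-k) * A⁻¹).r = 2 * k := by
  rw [C_zpow, C_zpow]; simp [A]; ring

end UT4

end BTP

open BTP

/-- In the free group on `a_1, b_1, …, a_g, b_g` (`g ≥ 1`), with
`c = [a_1,b_1]⋯[a_g,b_g]`, for every nonzero integer `k` the element
`c^k a_1 c^{-k} a_1⁻¹` lies in `γ_2 F` but not in `γ_3 F`; consequently conjugation
by `c^k` induces a nontrivial automorphism of `F/γ_3 F`. -/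
theorem boundary_twist_power_not_in_J3 (g : ℕ) (hg : 1 ≤ g) (k : ℤ) (hk : k ≠ 0) :
    let F := FreeGroup (Fin g ⊕ Fin g)
    let a : Fin g → F := fun i => FreeGroup.of (Sum.inl i)
    let b : Fin g → F := fun i => FreeGroup.of (Sum.inr i)
    let c : F := ((List.finRange g).map (fun i => ⁅a i, b i⁆)).prod
    (c ^ k * a ⟨0, hg⟩ * c ^ (-k) * (a ⟨0, hg⟩)⁻¹ ∈ (⊤ : Subgroup F).lowerCentralSeries 2) ∧
    (c ^ k * a ⟨0, hg⟩ * c ^ (-k) * (a ⟨0, hg⟩)⁻¹ ∉ (⊤ : Subgroup F).lowerCentralSeries 3) ∧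
    (∃ x : F, (QuotientGroup.mk (c ^ k * x * c ^ (-k)) : F ⧸ (⊤ : Subgroup F).lowerCentralSeries 3) ≠
      QuotientGroup.mk x) := by
  intro F a b c
  obtain ⟨n, rfl⟩ : ∃ n, g = n + 1 := ⟨g - 1, by omega⟩
  -- the element is a commutator ⁅c^k, a 0⁆
  have helt : c ^ k * a ⟨0, hg⟩ * c ^ (-k) * (a ⟨0, hg⟩)⁻¹ = ⁅c ^ k, a ⟨0, hg⟩⁆ := by
    rw [commutatorElement_def, zpow_neg]
  -- c is in the commutator subgroup
  have hc1 : c ∈ (⊤ : Subgroup F).lowerCentralSeries 1 := by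
    rw [lcs_succ]
    refine Subgroup.list_prod_mem _ ?_
    intro x hx
    simp only [List.mem_map] at hx
    obtain ⟨i, -, rfl⟩ := hx
    exact Subgroup.commutator_mem_commutator (by simp [Subgroup.lowerCentralSeries_zero]) (by simp)
  have hmem2 : c ^ k * a ⟨0, hg⟩ * c ^ (-k) * (a ⟨0, hg⟩)⁻¹ ∈ (⊤ : Subgroup F).lowerCentralSeries 2 := by
    rw [helt, lcs_succ]
    exact Subgroup.commutator_mem_commutator (Subgroup.zpow_mem _ hc1 k) (Subgroup.mem_top _)
  -- the homomorphism to UT4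
  set f : (Fin (n + 1) ⊕ Fin (n + 1)) → UT4 :=
    Sum.elim (fun i => if i = 0 then UT4.A else 1) (fun i => if i = 0 then UT4.B else 1) with hf
  set φ : F →* UT4 := FreeGroup.lift f with hφ
  have hφa : φ (a ⟨0, hg⟩) = UT4.A := by
    show FreeGroup.lift f (FreeGroup.of (Sum.inl ⟨0, hg⟩)) = UT4.A
    rw [FreeGroup.lift_apply_of]
    simp [hf]
  have hφc : φ c = UT4.C := by
    have : φ c = ((List.finRange (n + 1)).map (fun i => ⁅φ (a i), φ (b i)⁆)).prod := by
      rw [hφ]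
      simp only [c]
      rw [map_list_prod, List.map_map]
      congr 1
      apply List.map_congr_left
      intro i _
      exact map_commutatorElement _ _ _
    rw [this, List.finRange_succ]
    simp only [List.map_cons, List.prod_cons, List.map_map]
    have h0a : φ (a 0) = UT4.A := by
      show FreeGroup.lift f (FreeGroup.of (Sum.inl 0)) = UT4.A
      rw [FreeGroup.lift_apply_of]; simp [hf]
    have h0b : φ (b 0) = UT4.B := by
      show FreeGroup.lift f (FreeGroup.of (Sum.inr 0)) = UT4.B
      rw [FreeGroup.lift_apply_of]; simp [hf]
    have htail : ((List.finRange n).map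
        ((fun i => ⁅φ (a i), φ (b i)⁆) ∘ Fin.succ)).prod = 1 := by
      apply List.prod_eq_one
      intro x hx
      simp only [List.mem_map, Function.comp_apply] at hx
      obtain ⟨i, -, rfl⟩ := hx
      have ha' : φ (a i.succ) = 1 := by
        show FreeGroup.lift f (FreeGroup.of (Sum.inl i.succ)) = 1
        rw [FreeGroup.lift_apply_of]; simp [hf, Fin.succ_ne_zero]
      have hb' : φ (b i.succ) = 1 := by
        show FreeGroup.lift f (FreeGroup.of (Sum.inr i.succ)) = 1
        rw [FreeGroup.lift_apply_of]; simp [hf, Fin.succ_ne_zero]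
      simp [ha', hb']
    rw [htail, mul_one, h0a, h0b, UT4.comm_AB]
  have hφelt : φ (c ^ k * a ⟨0, hg⟩ * c ^ (-k) * (a ⟨0, hg⟩)⁻¹)
      = UT4.C ^ k * UT4.A * UT4.C ^ (-k) * UT4.A⁻¹ := by
    have hφa0 : φ (a 0) = UT4.A := hφa
    simp [map_mul, map_zpow, map_inv, hφa, hφa0, hφc]
    rw [map_inv, hφa0]
  have hnmem3 : c ^ k * a ⟨0, hg⟩ * c ^ (-k) * (a ⟨0, hg⟩)⁻¹ ∉ (⊤ : Subgroup F).lowerCentralSeries 3 := by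
    intro hmem
    have h1 : φ (c ^ k * a ⟨0, hg⟩ * c ^ (-k) * (a ⟨0, hg⟩)⁻¹) ∈ (⊤ : Subgroup UT4).lowerCentralSeries 3 :=
      lowerCentralSeries.map φ 3 ⟨_, hmem, rfl⟩
    rw [UT4.lcs3_eq_bot, Subgroup.mem_bot] at h1
    have h2 := UT4.key_r k
    rw [← hφelt, h1] at h2
    simp at h2
    omega
  refine ⟨hmem2, hnmem3, ⟨a ⟨0, hg⟩, ?_⟩⟩
  intro hEq
  rw [QuotientGroup.eq] at hEq
  apply hnmem3
  have : c ^ k * a ⟨0, hg⟩ * c ^ (-k) * (a ⟨0, hg⟩)⁻¹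
      = a ⟨0, hg⟩ * ((c ^ k * a ⟨0, hg⟩ * c ^ (-k))⁻¹ * a ⟨0, hg⟩)⁻¹ * (a ⟨0, hg⟩)⁻¹ := by
    rw [mul_inv_rev, inv_inv, mul_inv_cancel_left]
  rw [this]
  exact Subgroup.Normal.conj_mem inferInstance _
    (((⊤ : Subgroup F).lowerCentralSeries 3).inv_mem hEq) _
end
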